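/- Let g be the symplectic or orthogonal Lie algebra as above, and let V be a highest weight g-module with highest weight λ = (λ_1,…,λ_n) and highest weight vector w. Then for every r ≥ 0, the vector (F^r)_{nn}·w − (−λ_1)^{r}·w lies in the sum of the weight spaces V_μ over weights μ ≠ λ. (This is the module-theoretic form of the relative Harish–Chandra projection formula pr_n T_{nn}(u) = 1/(u+λ_1).) -/

import Mathlib

noncomputable section
open scoped Classical
attribute [local instance] LieRing.ofAssociativeRing

/-! ### The symplectic / orthogonal Lie algebra `g ⊆ gl_N`.

`N = 2n` (even case, `oc = false`) or `N = 2n + 1` (odd case, `oc = true`), with index set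
`I = {−n,…,−1,1,…,n}` resp. `I = {−n,…,n}`.  The Boolean `symp` distinguishes the symplectic
case (`symp = true`, only allowed for `N = 2n`) from the orthogonal case (`symp = false`). -/

/-- The index set `I`: integers `i` with `−n ≤ i ≤ n`, excluding `0` in the even case. -/
def Idx (n : ℕ) (oc : Bool) : Finset ℤ :=
  (Finset.Icc (-(n : ℤ)) (n : ℤ)).filter fun i => i ≠ 0 ∨ oc = true

abbrev IdxT (n : ℕ) (oc : Bool) := {i : ℤ // i ∈ Idx n oc}

/-- Negation `i ↦ −i` on the index set. -/
def negI {n : ℕ} {oc : Bool} (i : IdxT n oc) : IdxT n oc :=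
  ⟨-i.1, by
    have h := i.2
    simp only [Idx, Finset.mem_filter, Finset.mem_Icc] at h ⊢
    refine ⟨⟨by omega, by omega⟩, ?_⟩
    rcases h.2 with h' | h'
    · left; omega
    · right; exact h'⟩

/-- The sign of a (nonzero) index, as a complex number. -/
def sgnC (i : ℤ) : ℂ := if 0 < i then 1 else -1

/-- `θ_{ij} = 1` in the orthogonal case, `θ_{ij} = sgn(i) sgn(j)` in the symplectic case. -/
def theta (symp : Bool) (i j : ℤ) : ℂ := if symp then sgnC i * sgnC j else 1

/-- The generator `F_{ij} = E_{ij} − θ_{ij} E_{−j,−i}` as an `N × N` complex matrix. -/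
def FmatC (n : ℕ) (oc symp : Bool) (i j : IdxT n oc) : Matrix (IdxT n oc) (IdxT n oc) ℂ :=
  Matrix.single i j 1 - theta symp i.1 j.1 • Matrix.single (negI j) (negI i) 1

/-- The classical Lie algebra `g ⊆ gl_N` spanned by the `F_{ij}` (the Lie subalgebra they
generate; it coincides with their linear span since the span is closed under brackets). -/
abbrev gLie (n : ℕ) (oc symp : Bool) : LieSubalgebra ℂ (Matrix (IdxT n oc) (IdxT n oc) ℂ) :=
  LieSubalgebra.lieSpan ℂ _ {A | ∃ i j, A = FmatC n oc symp i j}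

/-- `F_{ij}` as an element of `g`. -/
def Fg (n : ℕ) (oc symp : Bool) (i j : IdxT n oc) : gLie n oc symp :=
  ⟨FmatC n oc symp i j, LieSubalgebra.subset_lieSpan ⟨i, j, rfl⟩⟩

/-- The universal enveloping algebra `U(g)`. -/
abbrev Ug (n : ℕ) (oc symp : Bool) := UniversalEnvelopingAlgebra ℂ (gLie n oc symp)

/-- The `N × N` matrix `F` over `U(g)` whose `(i,j)` entry is `ι(F_{ij})`. -/
def Fu (n : ℕ) (oc symp : Bool) : Matrix (IdxT n oc) (IdxT n oc) (Ug n oc symp) :=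
  fun i j => UniversalEnvelopingAlgebra.ι ℂ (Fg n oc symp i j)

/-! ### Highest weight `g`-modules. -/

/-- The index `i − n − 1` (for 1-based `i`): the Cartan generators are
`H_1 = F_{−n,−n}, …, H_n = F_{−1,−1}`; with 0-based `i : Fin n` the index is `i − n`. -/
def cartanIdx (n : ℕ) (oc : Bool) (i : Fin n) : IdxT n oc :=
  ⟨(i : ℤ) - n, by
    have hi : ((i : ℕ) : ℤ) < n := by exact_mod_cast i.2
    simp only [Idx, Finset.mem_filter, Finset.mem_Icc]
    exact ⟨⟨by omega, by omega⟩, Or.inl (by omega)⟩⟩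

variable {V : Type} [AddCommGroup V] [Module ℂ V]

/-- `V` is a highest weight `g`-module with highest weight `lam` and highest weight
vector `w`: `V` is generated by `w ≠ 0`, `F_{ij}·w = 0` for `i < j`, and `H_i·w = λ_i w`. -/
structure IsHWg (n : ℕ) (oc symp : Bool) (ρ : gLie n oc symp →ₗ⁅ℂ⁆ Module.End ℂ V)
    (lam : Fin n → ℂ) (w : V) : Prop where
  w_ne : w ≠ 0
  gen : ∀ v : V, ∃ u : Ug n oc symp, (UniversalEnvelopingAlgebra.lift ℂ ρ u) w = v
  upper : ∀ i j : IdxT n oc, i.1 < j.1 → ρ (Fg n oc symp i j) w = 0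
  diag : ∀ i : Fin n, ρ (Fg n oc symp (cartanIdx n oc i) (cartanIdx n oc i)) w = lam i • w

/-- The weight space `V_μ = {m ∈ V : H_i·m = μ_i m for all i}`. -/
def wtSpg (n : ℕ) (oc symp : Bool) (ρ : gLie n oc symp →ₗ⁅ℂ⁆ Module.End ℂ V)
    (μ : Fin n → ℂ) : Submodule ℂ V :=
  ⨅ i : Fin n,
    Module.End.eigenspace (ρ (Fg n oc symp (cartanIdx n oc i) (cartanIdx n oc i))) (μ i)

/-- The index `n ∈ I`. -/
def posN (n : ℕ) (oc : Bool) (hn : 1 ≤ n) : IdxT n oc :=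
  ⟨(n : ℤ), by
    simp only [Idx, Finset.mem_filter, Finset.mem_Icc]
    exact ⟨⟨by omega, by omega⟩, Or.inl (by omega)⟩⟩


lemma Fg_pp_eq_neg (n : ℕ) (hn : 1 ≤ n) (oc symp : Bool) :
    Fg n oc symp (posN n oc hn) (posN n oc hn)
      = - Fg n oc symp (cartanIdx n oc ⟨0, hn⟩) (cartanIdx n oc ⟨0, hn⟩) := by
  apply Subtype.ext
  show FmatC n oc symp _ _ = - FmatC n oc symp _ _
  have hq : negI (posN n oc hn) = cartanIdx n oc ⟨0, hn⟩ := by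
    apply Subtype.ext
    show -(n : ℤ) = ((⟨0, hn⟩ : Fin n) : ℤ) - n
    simp
  have hp : negI (cartanIdx n oc ⟨0, hn⟩) = posN n oc hn := by
    apply Subtype.ext
    show -(((⟨0, hn⟩ : Fin n) : ℤ) - n) = (n : ℤ)
    simp
  have hs1 : sgnC (posN n oc hn).1 = 1 := by
    simp only [sgnC, posN]
    exact if_pos (by exact_mod_cast hn)
  have hs2 : sgnC (cartanIdx n oc ⟨0, hn⟩).1 = -1 := by
    simp only [sgnC, cartanIdx]
    exact if_neg (by simp)
  have ht1 : theta symp (posN n oc hn).1 (posN n oc hn).1 = 1 := by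
    cases symp <;> simp [theta, hs1]
  have ht2 : theta symp (cartanIdx n oc ⟨0, hn⟩).1 (cartanIdx n oc ⟨0, hn⟩).1 = 1 := by
    cases symp <;> simp [theta, hs2]
  rw [FmatC, FmatC, ht1, ht2, hq, hp, one_smul, one_smul]
  abel

lemma lt_of_ne_posN (n : ℕ) (hn : 1 ≤ n) (oc : Bool) (k : IdxT n oc)
    (hk : k ≠ posN n oc hn) : k.1 < (n : ℤ) := by
  have h := k.2
  simp only [Idx, Finset.mem_filter, Finset.mem_Icc] at h
  rcases lt_or_eq_of_le h.1.2 with h' | h'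
  · exact h'
  · exact absurd (Subtype.ext h') hk

lemma pow_apply_w (n : ℕ) (hn : 1 ≤ n) (oc symp : Bool)
    (ρ : gLie n oc symp →ₗ⁅ℂ⁆ Module.End ℂ V) (lam : Fin n → ℂ) (w : V)
    (hhw : IsHWg n oc symp ρ lam w) (r : ℕ) :
    (UniversalEnvelopingAlgebra.lift ℂ ρ
        ((Fu n oc symp ^ r) (posN n oc hn) (posN n oc hn))) w
      = (-(lam ⟨0, hn⟩)) ^ r • w := by
  have hFw : ρ (Fg n oc symp (posN n oc hn) (posN n oc hn)) w = (-(lam ⟨0, hn⟩)) • w := by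
    rw [Fg_pp_eq_neg n hn oc symp, ← LieHom.coe_toLinearMap, map_neg, LinearMap.neg_apply,
      LieHom.coe_toLinearMap, hhw.diag ⟨0, hn⟩, neg_smul]
  induction r with
  | zero =>
    rw [pow_zero, Matrix.one_apply_eq, map_one, pow_zero, one_smul]
    rfl
  | succ r ih =>
    rw [pow_succ, Matrix.mul_apply, map_sum, LinearMap.coe_sum, Finset.sum_apply]
    rw [Finset.sum_eq_single (posN n oc hn)]
    · rw [map_mul]
      show (UniversalEnvelopingAlgebra.lift ℂ ρ ((Fu n oc symp ^ r) _ _))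
        ((UniversalEnvelopingAlgebra.lift ℂ ρ (Fu n oc symp (posN n oc hn) (posN n oc hn))) w)
        = _
      rw [show UniversalEnvelopingAlgebra.lift ℂ ρ (Fu n oc symp (posN n oc hn) (posN n oc hn))
          = ρ (Fg n oc symp (posN n oc hn) (posN n oc hn)) from
        UniversalEnvelopingAlgebra.lift_ι_apply ℂ ρ _, hFw, map_smul, ih, smul_smul,
        pow_succ, mul_comm]
    · intro k _ hk
      rw [map_mul]
      show (UniversalEnvelopingAlgebra.lift ℂ ρ ((Fu n oc symp ^ r) _ _))
        ((UniversalEnvelopingAlgebra.lift ℂ ρ (Fu n oc symp k (posN n oc hn))) w) = 0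
      rw [show UniversalEnvelopingAlgebra.lift ℂ ρ (Fu n oc symp k (posN n oc hn))
          = ρ (Fg n oc symp k (posN n oc hn)) from
        UniversalEnvelopingAlgebra.lift_ι_apply ℂ ρ _,
        hhw.upper k (posN n oc hn) (lt_of_ne_posN n hn oc k hk), map_zero]
    · intro h
      exact absurd (Finset.mem_univ _) h

/-- If `V` is a highest weight `g`-module with highest weight `λ` and highest
weight vector `w`, then for every `r ≥ 0` the vector `(F^r)_{nn}·w − (−λ_1)^r·w` lies in the
sum of the weight spaces `V_μ` over weights `μ ≠ λ`. -/
theorem stmt_6 (n : ℕ) (hn : 1 ≤ n) (oc symp : Bool) (hcase : ¬(oc = true ∧ symp = true))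
    (ρ : gLie n oc symp →ₗ⁅ℂ⁆ Module.End ℂ V) (lam : Fin n → ℂ) (w : V)
    (hhw : IsHWg n oc symp ρ lam w) (r : ℕ) :
    (UniversalEnvelopingAlgebra.lift ℂ ρ
        ((Fu n oc symp ^ r) (posN n oc hn) (posN n oc hn))) w
      - (-(lam ⟨0, hn⟩)) ^ r • w ∈
      ⨆ (μ : Fin n → ℂ) (_ : μ ≠ lam), wtSpg n oc symp ρ μ := by
  rw [pow_apply_w n hn oc symp ρ lam w hhw r, sub_self]
  exact zero_mem _
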